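/- For every n ≥ 2, the random variables TPL_n − (n−1) and HPL_n have the same distribution. -/

import Mathlib

open MeasureTheory ProbabilityTheory

namespace RRT19


def filt (j : ℕ → ℕ) (k : ℕ) : Finset ℕ :=
  (Finset.range k).filter (fun m => j m = j k)

def dd (j : ℕ → ℕ) : ℕ → ℕ
  | 0 => 0
  | 1 => 0
  | (k+2) => if _h : j k < k + 2 then dd j (j k) + 1 else 0
  termination_by v => v
  decreasing_by exact _h

def rr (j : ℕ → ℕ) : ℕ → ℕ
  | 0 => 0
  | 1 => 0
  | (k+2) => if _h : j k < k + 2 then rr j (j k) + (filt j k).card else 0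
  termination_by v => v
  decreasing_by exact _h

def phi (j : ℕ → ℕ) : ℕ → ℕ
  | k =>
    if h : (filt j k).Nonempty then (filt j k).max' h + 2
    else if h2 : 3 ≤ j k ∧ j k - 2 < k then phi j (j k - 2)
    else 1
  termination_by k => k
  decreasing_by exact h2.2

def Valid (j : ℕ → ℕ) : Prop := ∀ k, 1 ≤ j k ∧ j k ≤ k + 1

lemma dd_step (j : ℕ → ℕ) (k : ℕ) (h : j k < k + 2) : dd j (k+2) = dd j (j k) + 1 := by
  rw [dd]; simp [h]

lemma rr_step (j : ℕ → ℕ) (k : ℕ) (h : j k < k + 2) :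
    rr j (k+2) = rr j (j k) + (filt j k).card := by
  rw [rr]; simp [h]

@[simp] lemma dd_zero (j : ℕ → ℕ) : dd j 0 = 0 := by rw [dd]
@[simp] lemma dd_one (j : ℕ → ℕ) : dd j 1 = 0 := by rw [dd]
@[simp] lemma rr_zero (j : ℕ → ℕ) : rr j 0 = 0 := by rw [rr]
@[simp] lemma rr_one (j : ℕ → ℕ) : rr j 1 = 0 := by rw [rr]

lemma phi_max (j : ℕ → ℕ) (k : ℕ) (h : (filt j k).Nonempty) :
    phi j k = (filt j k).max' h + 2 := by
  rw [phi]; simp [h]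

lemma phi_else (j : ℕ → ℕ) (k : ℕ) (h : ¬ (filt j k).Nonempty) :
    phi j k = if 3 ≤ j k ∧ j k - 2 < k then phi j (j k - 2) else 1 := by
  rw [phi]; split_ifs with h1 h2 h3 <;> simp_all

lemma mem_filt {j : ℕ → ℕ} {k m : ℕ} : m ∈ filt j k ↔ m < k ∧ j m = j k := by
  simp [filt]

lemma valid_zero {j : ℕ → ℕ} (hj : Valid j) : j 0 = 1 := by
  have := hj 0; omega

/-- for a valid sequence, if `j k ≥ 2` then `j k - 2 < k`. -/
lemma valid_sub_lt {j : ℕ → ℕ} (hj : Valid j) {k : ℕ} (h : 3 ≤ j k) : j k - 2 < k := by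
  have := hj k; omega

lemma phi_else' {j : ℕ → ℕ} (hj : Valid j) (k : ℕ) (h : ¬ (filt j k).Nonempty) :
    phi j k = if 3 ≤ j k then phi j (j k - 2) else 1 := by
  rw [phi_else j k h]
  by_cases h3 : 3 ≤ j k
  · simp [h3, valid_sub_lt hj h3]
  · simp [h3]

@[simp] lemma filt_zero (j : ℕ → ℕ) : filt j 0 = ∅ := by simp [filt]

lemma phi_zero {j : ℕ → ℕ} (hj : Valid j) : phi j 0 = 1 := by
  have h : ¬ (filt j 0).Nonempty := by simp
  rw [phi_else' hj 0 h]
  have := hj 0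
  have : ¬ 3 ≤ j 0 := by omega
  simp [this]

/-- validity of `phi j` -/
lemma phi_valid {j : ℕ → ℕ} (hj : Valid j) : Valid (phi j) := by
  intro k
  induction k using Nat.strong_induction_on with
  | _ k ih =>
    by_cases h : (filt j k).Nonempty
    · rw [phi_max j k h]
      have := Finset.max'_mem _ h
      rw [mem_filt] at this
      omega
    · rw [phi_else' hj k h]
      by_cases h3 : 3 ≤ j k
      · have hlt := valid_sub_lt hj h3
        have := ih _ hlt
        have := hj k
        simp only [h3, if_true]
        omega
      · simp [h3]

/-- provenance: every value `≥ 2` of `phi j` comes from a max-case. -/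
lemma phi_prov {j : ℕ → ℕ} (hj : Valid j) :
    ∀ i, 2 ≤ phi j i → ∃ i', i' ≤ i ∧ ∃ h : (filt j i').Nonempty,
      phi j i = (filt j i').max' h + 2 := by
  intro i
  induction i using Nat.strong_induction_on with
  | _ i ih =>
    intro h2
    by_cases h : (filt j i).Nonempty
    · exact ⟨i, le_rfl, h, phi_max j i h⟩
    · rw [phi_else' hj i h] at h2 ⊢
      by_cases h3 : 3 ≤ j i
      · simp only [h3, if_true] at h2 ⊢
        obtain ⟨i', hi', hne, heq⟩ := ih _ (valid_sub_lt hj h3) h2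
        exact ⟨i', le_trans hi' (le_of_lt (valid_sub_lt hj h3)), hne, heq⟩
      · simp [h3] at h2

/-- freshness: a max-case value of `phi` never occurred before. -/
lemma phi_fresh {j : ℕ → ℕ} (hj : Valid j) {k : ℕ} (h : (filt j k).Nonempty) :
    ∀ i < k, phi j i ≠ phi j k := by
  intro i hik heq
  rw [phi_max j k h] at heq
  set m := (filt j k).max' h with hm
  have hmmem : m ∈ filt j k := Finset.max'_mem _ h
  rw [mem_filt] at hmmem
  have h2 : 2 ≤ phi j i := by omega
  obtain ⟨i', hi'le, hne, heq'⟩ := phi_prov hj i h2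
  rw [heq'] at heq
  have hmax2 : (filt j i').max' hne = m := by omega
  have hmem2 : m ∈ filt j i' := hmax2 ▸ Finset.max'_mem _ hne
  rw [mem_filt] at hmem2
  -- j i' = j k, i' < k
  have hji' : j i' = j k := by rw [← hmem2.2, hmmem.2]
  have hi'k : i' < k := lt_of_le_of_lt hi'le hik
  have : i' ∈ filt j k := mem_filt.2 ⟨hi'k, hji'⟩
  have := Finset.le_max' _ _ this
  omega



/-- `pii j a` : T'-parent of node `a`. -/
def pii (j : ℕ → ℕ) (a : ℕ) : ℕ := if 3 ≤ a then phi j (a - 2) else 1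

/-- children of node `a` present among first `k` attachments. -/
def ch (j : ℕ → ℕ) (a k : ℕ) : Finset ℕ := (Finset.range k).filter (fun m => j m = a)

lemma filt_eq_ch (j : ℕ → ℕ) (k : ℕ) : filt j k = ch j (j k) k := rfl

lemma ch_mono {j : ℕ → ℕ} {a k : ℕ} (h : ch j a (k+1) = ∅) : ch j a k = ∅ := by
  have hsub : ch j a k ⊆ ch j a (k+1) :=
    Finset.filter_subset_filter _ (by intro x hx; simp at hx ⊢; omega)
  rw [h] at hsub
  exact Finset.subset_empty.mp hsub

lemma mem_ch {j : ℕ → ℕ} {a k m : ℕ} : m ∈ ch j a k ↔ m < k ∧ j m = a := by simp [ch]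

lemma phi_else'' {j : ℕ → ℕ} (hj : Valid j) (k : ℕ) (h : ¬ (filt j k).Nonempty) :
    phi j k = pii j (j k) := by
  rw [phi_else' hj k h, pii]

/-- key injectivity: two distinct currently-childless nodes have distinct T'-parents. -/
lemma pii_inj {j : ℕ → ℕ} (hj : Valid j) :
    ∀ k u w, 2 ≤ u → u ≤ k+1 → 2 ≤ w → w ≤ k+1 → u ≠ w →
      ch j u k = ∅ → ch j w k = ∅ → pii j u ≠ pii j w := by
  intro k
  induction k with
  | zero => intro u w hu hu1 hw hw1 _ _ _; omega
  | succ k ih =>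
    -- asymmetric step : u = k+2
    have step : ∀ u w, u = k + 2 → 2 ≤ w → w ≤ k+1 → u ≠ w →
        ch j u (k+1) = ∅ → ch j w (k+1) = ∅ → pii j u ≠ pii j w := by
      intro u w hu hw hw1 huw hchu hchw
      subst hu
      have hpu : pii j (k+2) = phi j k := by
        rcases Nat.eq_zero_or_pos k with hk | hk
        · subst hk; simp [pii, phi_zero hj]
        · have h3 : 3 ≤ k + 2 := by omega
          simp [pii, h3]
      rw [hpu]
      by_cases hne : (filt j k).Nonempty
      · -- fresh value
        by_cases h3 : 3 ≤ w
        · have : w - 2 < k := by omega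
          have := phi_fresh hj hne _ this
          simp only [pii, h3, if_true]
          exact fun hc => this hc.symm
        · have hw2 : w = 2 := by omega
          simp only [pii, hw2]
          norm_num
          rw [phi_max j k hne]
          omega
      · -- else case
        set w0 := j k with hw0
        have hk1 : 1 ≤ k := by omega
        have hw02 : 2 ≤ w0 := by
          have := hj k
          rcases Nat.lt_or_ge (j k) 2 with h1 | h1
          · exfalso
            have hj0 : j 0 = 1 := valid_zero hj
            have : j k = 1 := by omega
            have : (0:ℕ) ∈ filt j k := mem_filt.2 ⟨by omega, by omega⟩
            exact hne ⟨0, this⟩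
          · exact h1
        have hw0k : w0 ≤ k + 1 := (hj k).2
        have hphik : phi j k = pii j w0 := phi_else'' hj k hne
        rw [hphik]
        have hkmem : k ∈ ch j w0 (k+1) := mem_ch.2 ⟨by omega, rfl⟩
        by_cases hww0 : w = w0
        · exfalso; rw [← hww0] at hkmem; rw [hchw] at hkmem; simp at hkmem
        · -- apply IH to (w0, w)
          have hchw0k : ch j w0 k = ∅ := by
            rw [Finset.eq_empty_iff_forall_notMem]
            intro x hx
            rw [mem_ch] at hx
            exact hne ⟨x, mem_filt.2 ⟨hx.1, by rw [hx.2]⟩⟩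
          exact ih w0 w hw02 hw0k hw hw1 (fun hc => hww0 hc.symm) hchw0k (ch_mono hchw)
    intro u w hu hu1 hw hw1 huw hchu hchw
    rcases Nat.lt_or_ge u (k+2) with hu2 | hu2
    · rcases Nat.lt_or_ge w (k+2) with hw2 | hw2
      · exact ih u w hu (by omega) hw (by omega) huw (ch_mono hchu) (ch_mono hchw)
      · have : w = k+2 := by omega
        exact fun hc => (step w u this hu (by omega) (Ne.symm huw) hchw hchu) hc.symm
    · have : u = k+2 := by omega
      exact step u w this hw (by omega) huw hchu hchw

/-- B2 : in the else-case at `k`, no index strictly between `j k - 2` and `k`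
has the same `phi`-value. -/
lemma phi_B2 {j : ℕ → ℕ} (hj : Valid j) {k m : ℕ} (hne : ¬ (filt j k).Nonempty)
    (hm1 : j k - 2 < m) (hm2 : m < k) : phi j m ≠ phi j k := by
  set w := j k with hw
  have hm0 : 1 ≤ m := by
    rcases Nat.eq_zero_or_pos m with h | h
    · subst h; omega
    · exact h
  have hw2 : 2 ≤ w := by
    by_contra h1
    have hj0 : j 0 = 1 := valid_zero hj
    have : j k = 1 := by have := hj k; omega
    exact hne ⟨0, mem_filt.2 ⟨by omega, by omega⟩⟩
  have hphik : phi j k = pii j w := phi_else'' hj k hne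
  rw [hphik]
  by_cases hnem : (filt j m).Nonempty
  · by_cases h3 : 3 ≤ w
    · have : w - 2 < m := by omega
      have := phi_fresh hj hnem _ this
      simp only [pii, h3, if_true]
      exact Ne.symm this
    · have : w = 2 := by omega
      simp only [pii, this]
      norm_num
      rw [phi_max j m hnem]
      omega
  · set u := j m with hu
    have hphim : phi j m = pii j u := phi_else'' hj m hnem
    rw [hphim]
    have huw : u ≠ w := by
      intro hc
      exact hne ⟨m, mem_filt.2 ⟨hm2, by rw [← hu, hc, hw]⟩⟩
    have hu2 : 2 ≤ u := by
      by_contra h1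
      have hj0 : j 0 = 1 := valid_zero hj
      have : j m = 1 := by have := hj m; omega
      exact hnem ⟨0, mem_filt.2 ⟨by omega, by omega⟩⟩
    have hchum : ch j u m = ∅ := by
      rw [Finset.eq_empty_iff_forall_notMem]
      intro x hx
      rw [mem_ch] at hx
      exact hnem ⟨x, mem_filt.2 ⟨hx.1, by rw [hx.2]⟩⟩
    have hchwm : ch j w m = ∅ := by
      rw [Finset.eq_empty_iff_forall_notMem]
      intro x hx
      rw [mem_ch] at hx
      exact hne ⟨x, mem_filt.2 ⟨by omega, by rw [hx.2]⟩⟩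
    exact pii_inj hj m u w hu2 ((hj m).2) hw2 (by omega) huw hchum hchwm



/-- in a max case, node `k+2` is a first child in T', so `filt (phi j) k = ∅`. -/
lemma filt_phi_max {j : ℕ → ℕ} (hj : Valid j) {k : ℕ} (h : (filt j k).Nonempty) :
    filt (phi j) k = ∅ := by
  rw [Finset.eq_empty_iff_forall_notMem]
  intro m hm
  rw [mem_filt] at hm
  exact phi_fresh hj h m hm.1 hm.2

/-- in the else case with `j k ≥ 3`. -/
lemma filt_phi_else3 {j : ℕ → ℕ} (hj : Valid j) {k : ℕ} (hne : ¬ (filt j k).Nonempty)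
    (h3 : 3 ≤ j k) :
    filt (phi j) k = insert (j k - 2) (filt (phi j) (j k - 2)) := by
  have hval : phi j k = phi j (j k - 2) := by rw [phi_else' hj k hne, if_pos h3]
  have hsub : j k - 2 < k := valid_sub_lt hj h3
  ext m
  simp only [mem_filt, Finset.mem_insert]
  constructor
  · rintro ⟨hmk, hphim⟩
    rcases Nat.lt_trichotomy m (j k - 2) with h | h | h
    · right; exact ⟨h, by rw [hphim, hval]⟩
    · left; exact h
    · exact absurd hphim (phi_B2 hj hne h hmk)
  · rintro (h | ⟨hm, hphim⟩)
    · subst h; exact ⟨hsub, hval.symm⟩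
    · exact ⟨by omega, by rw [hphim, hval]⟩

/-- in the else case with `j k = 2`. -/
lemma filt_phi_else2 {j : ℕ → ℕ} (hj : Valid j) {k : ℕ} (hne : ¬ (filt j k).Nonempty)
    (h2 : j k = 2) (hk : 1 ≤ k) :
    filt (phi j) k = {0} := by
  have hval : phi j k = 1 := by rw [phi_else' hj k hne]; simp [h2]
  ext m
  simp only [mem_filt, Finset.mem_singleton]
  constructor
  · rintro ⟨hmk, hphim⟩
    by_contra hm0
    have hm1 : j k - 2 < m := by omega
    exact phi_B2 hj hne hm1 hmk hphim
  · rintro rfl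
    exact ⟨by omega, by rw [phi_zero hj, hval]⟩

/-- case `j k = 1` forces `k = 0` for valid sequences with empty filter. -/
lemma else_k_pos {j : ℕ → ℕ} (hj : Valid j) {k : ℕ} (hne : ¬ (filt j k).Nonempty)
    (hk : 1 ≤ k) : 2 ≤ j k := by
  by_contra h1
  have : j k = 1 := by have := hj k; omega
  exact hne ⟨0, mem_filt.2 ⟨by omega, by rw [valid_zero hj, this]⟩⟩

/-- **main identity**: depth in T = horizontal position in T' plus one. -/
lemma dd_eq_rr_phi {j : ℕ → ℕ} (hj : Valid j) : ∀ k, dd j (k+2) = rr (phi j) (k+2) + 1 := by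
  intro k
  induction k using Nat.strong_induction_on with
  | _ k ih =>
    have hjk := hj k
    have hjk2 : j k < k + 2 := by omega
    have hpv := phi_valid hj k
    have hpk2 : phi j k < k + 2 := by omega
    rw [dd_step j k hjk2, rr_step (phi j) k hpk2]
    by_cases hne : (filt j k).Nonempty
    · -- max case
      set m := (filt j k).max' hne with hm
      have hmmem : m ∈ filt j k := Finset.max'_mem _ hne
      rw [mem_filt] at hmmem
      have hphik : phi j k = m + 2 := phi_max j k hne
      rw [filt_phi_max hj hne, Finset.card_empty, hphik]
      have ihm := ih m hmmem.1
      have hjm2 : j m < m + 2 := by have := hj m; omega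
      rw [dd_step j m hjm2, hmmem.2] at ihm
      omega
    · rcases Nat.eq_zero_or_pos k with hk0 | hk1
      · subst hk0
        have h1 : j 0 = 1 := valid_zero hj
        have h1' : phi j 0 = 1 := phi_zero hj
        rw [h1, h1', dd_one, rr_one]
        simp [filt]
      · have hw2 : 2 ≤ j k := else_k_pos hj hne hk1
        by_cases h3 : 3 ≤ j k
        · set w := j k with hwdef
          have hsub : w - 2 < k := valid_sub_lt hj h3
          have hphik : phi j k = phi j (w - 2) := by rw [phi_else' hj k hne, if_pos h3]
          have hcard : (filt (phi j) k).card = (filt (phi j) (w - 2)).card + 1 := by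
            rw [filt_phi_else3 hj hne h3]
            rw [Finset.card_insert_of_notMem]
            intro hmem
            rw [mem_filt] at hmem
            omega
          have ihw := ih (w - 2) hsub
          -- dd j w = rr (phi j) w + 1 ; with w = (w-2)+2
          have hw' : w - 2 + 2 = w := by omega
          rw [hw'] at ihw
          -- rr (phi j) w = rr (phi j) (phi j (w-2)) + card
          have hpw2 : phi j (w - 2) < w - 2 + 2 := by
            have := phi_valid hj (w - 2); omega
          have hrrw : rr (phi j) w = rr (phi j) (phi j (w - 2)) + (filt (phi j) (w - 2)).card := by
            rw [← hw']; exact rr_step (phi j) (w - 2) hpw2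
          rw [hphik, hcard]
          have hddw : dd j w = dd j (j (w-2)) + 1 := by
            rw [← hw']
            exact dd_step j (w - 2) (by have := hj (w-2); omega)
          omega
        · have hw : j k = 2 := by omega
          rw [filt_phi_else2 hj hne hw hk1]
          have hphik : phi j k = 1 := by rw [phi_else' hj k hne]; simp [hw]
          rw [hphik, hw, rr_one]
          have hdd2 : dd j 2 = 1 := by
            have h02 : j 0 < 2 := by rw [valid_zero hj]; omega
            rw [dd_step j 0 h02, valid_zero hj, dd_one]
          rw [hdd2]
          simp

/-- `phi` is an involution on valid sequences. -/
lemma phi_invol {j : ℕ → ℕ} (hj : Valid j) : ∀ k, phi (phi j) k = j k := by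
  intro k
  induction k using Nat.strong_induction_on with
  | _ k ih =>
    have hpv := phi_valid hj
    by_cases hne : (filt j k).Nonempty
    · -- fresh: filt (phi j) k = ∅
      have hemp : ¬ (filt (phi j) k).Nonempty := by
        rw [filt_phi_max hj hne]; simp
      set m := (filt j k).max' hne with hm
      have hmmem : m ∈ filt j k := Finset.max'_mem _ hne
      rw [mem_filt] at hmmem
      have hphik : phi j k = m + 2 := phi_max j k hne
      rw [phi_else' hpv k hemp, hphik]
      rcases Nat.eq_zero_or_pos m with hm0 | hm1
      · have : ¬ 3 ≤ m + 2 := by omega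
        rw [if_neg this]
        rw [← hmmem.2]
        rw [hm0] at hmmem ⊢
        exact (valid_zero hj).symm
      · have h3 : 3 ≤ m + 2 := by omega
        rw [if_pos h3]
        have : m + 2 - 2 = m := by omega
        rw [this, ih m hmmem.1, hmmem.2]
    · rcases Nat.eq_zero_or_pos k with hk0 | hk1
      · subst hk0
        rw [phi_zero hpv, valid_zero hj]
      · have hw2 : 2 ≤ j k := else_k_pos hj hne hk1
        by_cases h3 : 3 ≤ j k
        · have hfs : filt (phi j) k = insert (j k - 2) (filt (phi j) (j k - 2)) :=
            filt_phi_else3 hj hne h3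
          have hnem : (filt (phi j) k).Nonempty := by rw [hfs]; exact Finset.insert_nonempty _ _
          rw [phi_max (phi j) k hnem]
          have hmax : (filt (phi j) k).max' hnem = j k - 2 := by
            apply le_antisymm
            · apply Finset.max'_le
              intro y hy
              rw [hfs, Finset.mem_insert] at hy
              rcases hy with h | h
              · omega
              · rw [mem_filt] at h; omega
            · apply Finset.le_max'
              rw [hfs]; exact Finset.mem_insert_self _ _
          rw [hmax]
          omega
        · have hw : j k = 2 := by omega
          have hfs : filt (phi j) k = {0} := filt_phi_else2 hj hne hw hk1
          have hnem : (filt (phi j) k).Nonempty := by rw [hfs]; simp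
          rw [phi_max (phi j) k hnem]
          have hmax : (filt (phi j) k).max' hnem = 0 := by
            apply Nat.le_antisymm _ (Nat.zero_le _)
            apply Finset.max'_le
            intro y hy
            rw [hfs, Finset.mem_singleton] at hy
            omega
          omega



lemma filt_congr {j1 j2 : ℕ → ℕ} {k : ℕ} (h : ∀ m ≤ k, j1 m = j2 m) :
    filt j1 k = filt j2 k := by
  unfold filt
  apply Finset.filter_congr
  intro m hm
  rw [Finset.mem_range] at hm
  rw [h m (by omega), h k le_rfl]

lemma dd_congr {j1 j2 : ℕ → ℕ} : ∀ v, (∀ m, m + 2 ≤ v → j1 m = j2 m) → dd j1 v = dd j2 v := by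
  intro v
  induction v using Nat.strong_induction_on with
  | _ v ih =>
    intro h
    match v with
    | 0 => rw [dd_zero, dd_zero]
    | 1 => rw [dd_one, dd_one]
    | (k+2) =>
      have hk : j1 k = j2 k := h k le_rfl
      rw [dd, dd, ← hk]
      by_cases hg : j1 k < k + 2
      · rw [dif_pos hg, dif_pos hg]
        congr 1
        exact ih (j1 k) hg (fun m hm => h m (by omega))
      · rw [dif_neg hg, dif_neg hg]

lemma rr_congr {j1 j2 : ℕ → ℕ} : ∀ v, (∀ m, m + 2 ≤ v → j1 m = j2 m) → rr j1 v = rr j2 v := by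
  intro v
  induction v using Nat.strong_induction_on with
  | _ v ih =>
    intro h
    match v with
    | 0 => rw [rr_zero, rr_zero]
    | 1 => rw [rr_one, rr_one]
    | (k+2) =>
      have hk : j1 k = j2 k := h k le_rfl
      have hfilt : filt j1 k = filt j2 k := filt_congr (fun m hm => h m (by omega))
      rw [rr, rr, ← hk, hfilt]
      by_cases hg : j1 k < k + 2
      · rw [dif_pos hg, dif_pos hg]
        congr 1
        exact ih (j1 k) hg (fun m hm => h m (by omega))
      · rw [dif_neg hg, dif_neg hg]

lemma phi_congr {j1 j2 : ℕ → ℕ} : ∀ k, (∀ m ≤ k, j1 m = j2 m) → phi j1 k = phi j2 k := by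
  intro k
  induction k using Nat.strong_induction_on with
  | _ k ih =>
    intro h
    have hfilt : filt j1 k = filt j2 k := filt_congr h
    have hk : j1 k = j2 k := h k le_rfl
    by_cases h1 : (filt j1 k).Nonempty
    · have h2 : (filt j2 k).Nonempty := hfilt ▸ h1
      rw [phi_max j1 k h1, phi_max j2 k h2]
      have : (filt j1 k).max' h1 = (filt j2 k).max' h2 := by
        apply le_antisymm
        · exact Finset.max'_le _ _ _ (fun y hy => Finset.le_max' _ _ (hfilt ▸ hy))
        · exact Finset.max'_le _ _ _ (fun y hy => Finset.le_max' _ _ (hfilt.symm ▸ hy))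
      rw [this]
    · have h2 : ¬ (filt j2 k).Nonempty := by rw [← hfilt]; exact h1
      rw [phi_else j1 k h1, phi_else j2 k h2, ← hk]
      by_cases hc : 3 ≤ j1 k ∧ j1 k - 2 < k
      · rw [if_pos hc, if_pos hc]
        exact ih _ hc.2 (fun m hm => h m (by omega))
      · rw [if_neg hc, if_neg hc]

lemma sum_dd_sub {j : ℕ → ℕ} (hj : Valid j) {n : ℕ} (hn : 1 ≤ n) :
    (∑ v ∈ Finset.Icc 1 n, (dd j v : ℤ)) - ((n : ℤ) - 1) =
      ∑ v ∈ Finset.Icc 1 n, (rr (phi j) v : ℤ) := by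
  have key : ∀ v ∈ Finset.Icc 2 n, (dd j v : ℤ) = (rr (phi j) v : ℤ) + 1 := by
    intro v hv
    rw [Finset.mem_Icc] at hv
    obtain ⟨k, rfl⟩ : ∃ k, v = k + 2 := ⟨v - 2, by omega⟩
    exact_mod_cast dd_eq_rr_phi hj k
  have hins : Finset.Icc 1 n = insert 1 (Finset.Icc 2 n) := by
    ext x; simp only [Finset.mem_Icc, Finset.mem_insert]; omega
  rw [hins, Finset.sum_insert (by simp), Finset.sum_insert (by simp),
    Finset.sum_congr rfl key, Finset.sum_add_distrib, Finset.sum_const, dd_one, rr_one,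
    Nat.card_Icc]
  have hcard : ((n + 1 - 2 : ℕ) : ℤ) = (n : ℤ) - 1 := by omega
  rw [nsmul_eq_mul, mul_one, hcard]
  push_cast
  ring


/-- padding a finite tuple to an infinite sequence. -/
def pad {N : ℕ} (s : Fin N → ℕ) : ℕ → ℕ := fun m => if h : m < N then s ⟨m, h⟩ else 1

lemma pad_lt {N : ℕ} (s : Fin N → ℕ) {m : ℕ} (h : m < N) : pad s m = s ⟨m, h⟩ := dif_pos h

lemma pad_valid {N : ℕ} {s : Fin N → ℕ}
    (hs : s ∈ Fintype.piFinset (fun k : Fin N => Finset.Icc 1 ((k : ℕ) + 1))) :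
    Valid (pad s) := by
  intro m
  by_cases h : m < N
  · rw [pad_lt s h]
    have := Fintype.mem_piFinset.1 hs ⟨m, h⟩
    rw [Finset.mem_Icc] at this
    exact this
  · simp [pad, h]

end RRT19

open RRT19 in
/-- In the random recursive tree chain (here `J k` stands for the paper's
`J_{k+1}`, uniform on `{1,…,k+1}`), with depths `D 1 = 0`, `D (k+2) = D (J k) + 1`,
horizontal positions `R 1 = 0`, `R (k+2) = R (J k) + #{m < k : J m = J k}`,
`TPL_n = ∑_{k=1}^n D k` and `HPL_n = ∑_{k=1}^n R k`, the random variables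
`TPL_n − (n−1)` and `HPL_n` have the same distribution for every `n ≥ 2`. -/
theorem rrt_tpl_hpl_same_distribution
    {Ω : Type*} [MeasurableSpace Ω] (μ : Measure Ω) [IsProbabilityMeasure μ]
    (J : ℕ → Ω → ℕ) (hJmeas : ∀ k, Measurable (J k))
    (hJindep : iIndepFun J μ)
    (hJlaw : ∀ k j, μ {ω | J k ω = j} =
      if j ∈ Finset.Icc 1 (k + 1) then ((k : ENNReal) + 1)⁻¹ else 0)
    (D : ℕ → Ω → ℕ) (hDmeas : ∀ n, Measurable (D n))
    (hD1 : ∀ ω, D 1 ω = 0)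
    (hD : ∀ k ω, D (k + 2) ω = D (J k ω) ω + 1)
    (R : ℕ → Ω → ℕ) (hRmeas : ∀ n, Measurable (R n))
    (hR1 : ∀ ω, R 1 ω = 0)
    (hR : ∀ k ω, R (k + 2) ω =
      R (J k ω) ω + ((Finset.range k).filter fun m => J m ω = J k ω).card) :
    ∀ n : ℕ, 2 ≤ n →
      Measure.map (fun ω => (∑ k ∈ Finset.Icc 1 n, (D k ω : ℤ)) - ((n : ℤ) - 1)) μ =
      Measure.map (fun ω => ∑ k ∈ Finset.Icc 1 n, (R k ω : ℤ)) μ := by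
  intro n hn
  classical
  set N := n - 1 with hN
  set S := Fintype.piFinset (fun k : Fin N => Finset.Icc 1 ((k : ℕ) + 1)) with hS
  set F : (Fin N → ℕ) → ℤ :=
    fun s => (∑ v ∈ Finset.Icc 1 n, (dd (pad s) v : ℤ)) - ((n : ℤ) - 1) with hFdef
  set G : (Fin N → ℕ) → ℤ := fun s => ∑ v ∈ Finset.Icc 1 n, (rr (pad s) v : ℤ) with hGdef
  set vecJ : Ω → (Fin N → ℕ) := fun ω k => J (k : ℕ) ω with hvecdef
  have hvec : Measurable vecJ := measurable_pi_lambda _ fun k => hJmeas _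
  have hF : Measurable F := measurable_of_countable _
  have hG : Measurable G := measurable_of_countable _
  -- a.e. the attachment variables are in range
  have hae : ∀ᵐ ω ∂μ, ∀ k, k < N → (1 ≤ J k ω ∧ J k ω ≤ k + 1) := by
    rw [ae_all_iff]
    intro k
    by_cases hk : k < N
    · have hgood : μ {ω | 1 ≤ J k ω ∧ J k ω ≤ k + 1} = 1 := by
        have hun : {ω | 1 ≤ J k ω ∧ J k ω ≤ k + 1} =
            ⋃ i ∈ (Finset.Icc 1 (k+1) : Finset ℕ), {ω | J k ω = i} := by
          ext ω
          simp only [Set.mem_setOf_eq, Set.mem_iUnion, Finset.mem_Icc]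
          constructor
          · intro h; exact ⟨J k ω, ⟨h.1, h.2⟩, rfl⟩
          · rintro ⟨i, hi, hJi⟩; rw [hJi]; exact hi
        rw [hun, measure_biUnion_finset]
        · have : ∀ i ∈ (Finset.Icc 1 (k+1) : Finset ℕ),
              μ {ω | J k ω = i} = ((k : ENNReal) + 1)⁻¹ := by
            intro i hi
            rw [hJlaw k i, if_pos hi]
          rw [Finset.sum_congr rfl this, Finset.sum_const, Nat.card_Icc]
          simp only [Nat.add_sub_cancel]
          rw [nsmul_eq_mul]
          have hne : ((k : ENNReal) + 1) ≠ 0 := by simp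
          have hnt : ((k : ENNReal) + 1) ≠ ⊤ := by
            simp [ENNReal.add_eq_top, ENNReal.natCast_ne_top]
          rw [show ((k + 1 : ℕ) : ENNReal) = (k : ENNReal) + 1 by push_cast; ring]
          exact ENNReal.mul_inv_cancel hne hnt
        · intro i _ i' _ hii'
          simp only [Function.onFun, Set.disjoint_left]
          intro ω h1 h2
          simp only [Set.mem_setOf_eq] at h1 h2
          exact hii' (h1 ▸ h2 ▸ rfl)
        · intro i _
          have : {ω | J k ω = i} = J k ⁻¹' {i} := rfl
          rw [this]
          exact hJmeas k (Set.to_countable _).measurableSet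
      have hms : MeasurableSet {ω | 1 ≤ J k ω ∧ J k ω ≤ k + 1} := by
        have : {ω | 1 ≤ J k ω ∧ J k ω ≤ k + 1} = J k ⁻¹' {i | 1 ≤ i ∧ i ≤ k + 1} := rfl
        rw [this]
        exact hJmeas k (Set.to_countable _).measurableSet
      rw [ae_iff]
      have : {ω | ¬ (k < N → 1 ≤ J k ω ∧ J k ω ≤ k + 1)} =
          {ω | 1 ≤ J k ω ∧ J k ω ≤ k + 1}ᶜ := by
        ext ω; simp [hk]
      rw [this, prob_compl_eq_zero_iff hms]
      exact hgood
    · filter_upwards with ω hk'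
      exact absurd hk' hk
  -- identification of the processes with the deterministic recursions, a.e.
  have hDae : (fun ω => (∑ k ∈ Finset.Icc 1 n, (D k ω : ℤ)) - ((n : ℤ) - 1))
      =ᵐ[μ] F ∘ vecJ := by
    filter_upwards [hae] with ω hω
    have hDv : ∀ v, 1 ≤ v → v ≤ n → D v ω = dd (pad (vecJ ω)) v := by
      intro v
      induction v using Nat.strong_induction_on with
      | _ v ih =>
        intro h1 h2
        match v, h1 with
        | 1, _ => rw [hD1 ω, dd]
        | (k+2), _ =>
          have hkN : k < N := by omega
          have hb := hω k hkN
          have hpadk : pad (vecJ ω) k = J k ω := by rw [pad_lt _ hkN]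
          rw [hD k ω, dd_step _ k (by rw [hpadk]; omega), hpadk]
          congr 1
          exact ih (J k ω) (by omega) hb.1 (by omega)
    simp only [Function.comp_apply, hFdef]
    congr 1
    apply Finset.sum_congr rfl
    intro v hv
    rw [Finset.mem_Icc] at hv
    rw [hDv v hv.1 hv.2]
  have hRae : (fun ω => ∑ k ∈ Finset.Icc 1 n, (R k ω : ℤ)) =ᵐ[μ] G ∘ vecJ := by
    filter_upwards [hae] with ω hω
    have hRv : ∀ v, 1 ≤ v → v ≤ n → R v ω = rr (pad (vecJ ω)) v := by
      intro v
      induction v using Nat.strong_induction_on with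
      | _ v ih =>
        intro h1 h2
        match v, h1 with
        | 1, _ => rw [hR1 ω, rr]
        | (k+2), _ =>
          have hkN : k < N := by omega
          have hb := hω k hkN
          have hpadk : pad (vecJ ω) k = J k ω := by rw [pad_lt _ hkN]
          have hfilt : filt (pad (vecJ ω)) k =
              (Finset.range k).filter (fun m => J m ω = J k ω) := by
            have : filt (pad (vecJ ω)) k = filt (fun m => J m ω) k := by
              apply filt_congr
              intro m hm
              exact pad_lt _ (by omega)
            rw [this]; rfl
          rw [hR k ω, rr_step _ k (by rw [hpadk]; omega), hpadk, hfilt]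
          congr 1
          exact ih (J k ω) (by omega) hb.1 (by omega)
    simp only [Function.comp_apply, hGdef]
    apply Finset.sum_congr rfl
    intro v hv
    rw [Finset.mem_Icc] at hv
    rw [hRv v hv.1 hv.2]
  rw [Measure.map_congr hDae, Measure.map_congr hRae,
    ← Measure.map_map hF hvec, ← Measure.map_map hG hvec]
  set κ := Measure.map vecJ μ with hκ
  -- the law of the attachment vector
  set w : ENNReal := ∏ k ∈ Finset.range N, (((k : ℕ) : ENNReal) + 1)⁻¹ with hw
  have hκx : ∀ x : Fin N → ℕ, κ {x} = if x ∈ S then w else 0 := by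
    intro x
    rw [hκ, Measure.map_apply hvec (measurableSet_singleton x)]
    have hpre : vecJ ⁻¹' {x} = ⋂ k ∈ Finset.range N, J k ⁻¹' {pad x k} := by
      ext ω
      simp only [Set.mem_preimage, Set.mem_singleton_iff, Set.mem_iInter, Set.mem_setOf_eq,
        Finset.mem_range]
      constructor
      · intro hx k hk
        rw [pad_lt x hk]
        exact congrFun hx ⟨k, hk⟩
      · intro hall
        funext k
        have := hall k.1 k.2
        rw [pad_lt x k.2] at this
        simpa using this
    have hmeas := hJindep.meas_biInter (S := Finset.range N)
      (s := fun i => J i ⁻¹' {pad x i})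
      (fun i _ => ⟨{pad x i}, (Set.to_countable _).measurableSet, rfl⟩)
    rw [hpre, hmeas]
    have hsing : ∀ i : ℕ, (J i ⁻¹' {pad x i} : Set Ω) = {ω | J i ω = pad x i} := fun i => rfl
    by_cases hxS : x ∈ S
    · rw [if_pos hxS]
      apply Finset.prod_congr rfl
      intro i hi
      rw [Finset.mem_range] at hi
      show μ (J i ⁻¹' {pad x i}) = _
      rw [hsing i, hJlaw i (pad x i), pad_lt x hi, if_pos]
      have := Fintype.mem_piFinset.1 hxS ⟨i, hi⟩
      simpa using this
    · rw [if_neg hxS]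
      obtain ⟨k0, hk0⟩ : ∃ k0 : Fin N, ¬ x k0 ∈ Finset.Icc 1 ((k0 : ℕ) + 1) := by
        by_contra hall
        push_neg at hall
        exact hxS (Fintype.mem_piFinset.2 hall)
      apply Finset.prod_eq_zero (Finset.mem_range.2 k0.2)
      show μ (J (k0 : ℕ) ⁻¹' {pad x (k0 : ℕ)}) = 0
      rw [hsing, hJlaw _ (pad x k0.1), pad_lt x k0.2, if_neg]
      simpa using hk0
  -- rewrite both sides as sums over S and reindex via phi
  apply Measure.ext
  intro A hA
  rw [Measure.map_apply hF hA, Measure.map_apply hG hA]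
  have happ : ∀ H : (Fin N → ℕ) → ℤ, Measurable H →
      κ (H ⁻¹' A) = ∑ s ∈ S, w * (if H s ∈ A then 1 else 0) := by
    intro H hH
    have hκsum : κ = ∑ s ∈ S, w • Measure.dirac s := by
      apply MeasureTheory.Measure.ext_of_singleton
      intro x
      rw [hκx x, Measure.finset_sum_apply]
      have : ∀ s ∈ S, (w • Measure.dirac s) {x} = if s = x then w else 0 := by
        intro s _
        rw [Measure.smul_apply, Measure.dirac_apply' s (measurableSet_singleton x)]
        by_cases hsx : s = x
        · simp [hsx]
        · simp [Set.indicator_apply, hsx]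
      rw [Finset.sum_congr rfl this, Finset.sum_ite_eq' S x (fun _ => w)]
    rw [hκsum, Measure.finset_sum_apply]
    apply Finset.sum_congr rfl
    intro s _
    rw [Measure.smul_apply, Measure.dirac_apply' s (hH hA)]
    by_cases hs : H s ∈ A
    · simp [Set.indicator_apply, Set.mem_preimage, hs]
    · simp [Set.indicator_apply, Set.mem_preimage, hs]
  rw [happ F hF, happ G hG]
  -- the bijection
  set Φ : (Fin N → ℕ) → (Fin N → ℕ) := fun s k => phi (pad s) (k : ℕ) with hΦdef
  have hΦS : ∀ s ∈ S, Φ s ∈ S := by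
    intro s hs
    apply Fintype.mem_piFinset.2
    intro k
    have := phi_valid (pad_valid hs) (k : ℕ)
    rw [Finset.mem_Icc]
    exact this
  have hΦΦ : ∀ s ∈ S, Φ (Φ s) = s := by
    intro s hs
    funext k
    have h1 : Φ (Φ s) k = phi (pad (Φ s)) (k : ℕ) := rfl
    have h2 : phi (pad (Φ s)) (k : ℕ) = phi (phi (pad s)) (k : ℕ) := by
      apply phi_congr
      intro m hm
      rw [pad_lt _ (show m < N by omega)]
    rw [h1, h2, phi_invol (pad_valid hs) (k : ℕ), pad_lt _ k.2]
  have hFG : ∀ s ∈ S, F s = G (Φ s) := by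
    intro s hs
    rw [hFdef, hGdef]
    simp only
    rw [sum_dd_sub (pad_valid hs) (by omega : 1 ≤ n)]
    apply Finset.sum_congr rfl
    intro v hv
    rw [Finset.mem_Icc] at hv
    congr 1
    apply rr_congr
    intro m hm
    rw [pad_lt _ (show m < N by omega)]
  exact Finset.sum_nbij' Φ Φ hΦS hΦS hΦΦ hΦΦ
    (fun s hs => by rw [hFG s hs])
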